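/- arXiv:2001.03757 — 2 statements merged into one kernel-verified Lean document; each statement's English description precedes it below -/
import Mathlib

section
/- Let $R>0$, $P>0$, $\alpha>2$ and $\delta=2/\alpha$. Let $D$ be a random variable with density $f(r)=\frac{8r}{3R^2}$ on $[R/2,\,R]$ and let $H$ be an Exp(1) random variable independent of $D$. Then for every $s>0$ with $sP\,2^{\alpha}R^{-\alpha}<1$, $\mathbb{E}\bigl[\exp(-sP\,D^{-\alpha}H)\bigr] \;=\; \frac{4}{3}\, S_\delta\bigl(-sP R^{-\alpha}\bigr) \;-\; \frac{1}{3}\, S_\delta\bigl(-sP\,2^{\alpha} R^{-\alpha}\bigr)$, where $S_\delta(z)=\sum_{n=0}^{\infty} \frac{\delta}{\delta-n} z^n$. -/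
open MeasureTheory ProbabilityTheory Set

/-- The series `S_δ(z) = ∑ₙ δ/(δ-n) zⁿ`, i.e. the Gauss hypergeometric function
`₂F₁(1, -δ; 1-δ; z)`. -/
noncomputable def Sser (δ z : ℝ) : ℝ := ∑' n : ℕ, δ / (δ - n) * z ^ n

lemma my_measurable_rpow_const (c : ℝ) : Measurable fun x : ℝ => x ^ c := by
  measurability

lemma integral_withDensity_ind {S : Set ℝ} (hS : MeasurableSet S) {f : ℝ → ℝ}
    (hf : Measurable f) (hf0 : ∀ x ∈ S, 0 ≤ f x) (g : ℝ → ℝ) :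
    ∫ x, g x ∂(volume.withDensity (fun x => ENNReal.ofReal (S.indicator f x)))
      = ∫ x in S, f x * g x := by
  have hmeas : Measurable fun x : ℝ => (S.indicator f x).toNNReal :=
    (hf.indicator hS).real_toNNReal
  rw [show (fun x : ℝ => ENNReal.ofReal (S.indicator f x))
      = fun x => ((S.indicator f x).toNNReal : ENNReal) from rfl,
    integral_withDensity_eq_integral_smul hmeas, ← integral_indicator hS]
  congr 1
  ext x
  rw [NNReal.smul_def, Real.coe_toNNReal']
  by_cases hx : x ∈ S
  · rw [Set.indicator_of_mem hx, Set.indicator_of_mem hx, max_eq_left (hf0 x hx), smul_eq_mul]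
  · simp [Set.indicator_of_notMem hx]

lemma lap_exp {b : ℝ} (hb : 0 ≤ b) :
    ∫ x, Real.exp (-(b * x)) ∂(volume.withDensity (fun x => ENNReal.ofReal
      (Set.indicator (Set.Ici (0 : ℝ)) (fun x => Real.exp (-x)) x))) = (1 + b)⁻¹ := by
  rw [integral_withDensity_ind measurableSet_Ici (measurable_neg.exp)
    (fun x _ => (Real.exp_pos _).le)]
  have key : ∀ x : ℝ, Real.exp (-x) * Real.exp (-(b * x)) = Real.exp (-((1+b) * x)) := by
    intro x; rw [← Real.exp_add]; ring_nf
  simp_rw [key]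
  rw [integral_Ici_eq_integral_Ioi]
  have h1b : 0 < 1 + b := by linarith
  have := integral_comp_mul_left_Ioi (fun x => Real.exp (-x)) 0 h1b
  simp only [mul_zero, smul_eq_mul] at this
  rw [this, integral_exp_neg_Ioi_zero, mul_one]

lemma sser_summable {δ z : ℝ} (hδ0 : 0 < δ) (hδ1 : δ < 1) (hz : |z| < 1) :
    Summable (fun n : ℕ => δ / (δ - n) * z ^ n) := by
  apply Summable.of_norm_bounded
    ((summable_geometric_of_lt_one (abs_nonneg z) hz).mul_left (1/(1-δ)))
  intro n
  rw [norm_mul, norm_pow, Real.norm_eq_abs, Real.norm_eq_abs]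
  have h1δ : 0 < 1 - δ := by linarith
  apply mul_le_mul_of_nonneg_right _ (pow_nonneg (abs_nonneg z) n)
  rcases Nat.eq_zero_or_pos n with h | h
  · subst h
    simp only [Nat.cast_zero, sub_zero, div_self hδ0.ne', abs_one]
    rw [le_div_iff₀ h1δ]; linarith
  · have hn1 : (1:ℝ) ≤ n := by exact_mod_cast h
    rw [abs_div, abs_of_pos hδ0, abs_of_neg (by linarith : δ - (n:ℝ) < 0), neg_sub]
    apply div_le_div₀ (by linarith) (by linarith) h1δ (by linarith)

lemma pow_int_eval {R α a : ℝ} (hR : 0 < R) (hα : 2 < α) (n : ℕ) :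
    ∫ r in Icc (R/2) R, (8 * r / (3 * R^2)) * (-(a * r ^ (-α)))^n
      = 4/3 * ((2/α) / (2/α - n) * (-(a * R ^ (-α)))^n)
        - 1/3 * ((2/α) / (2/α - n) * (-(a * 2 ^ α * R ^ (-α)))^n) := by
  have hα0 : (0:ℝ) < α := by linarith
  have hR2 : (0:ℝ) < R / 2 := by linarith
  have hne : (2 : ℝ) - α * n ≠ 0 := by
    rcases Nat.eq_zero_or_pos n with h | h
    · simp [h]
    · have hn1 : (1:ℝ) ≤ n := by exact_mod_cast h
      nlinarith
  have hne' : (1 : ℝ) - α * n ≠ -1 := fun h => hne (by linarith)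
  have hcongr : ∀ r ∈ Icc (R/2) R, (8 * r / (3 * R^2)) * (-(a * r ^ (-α)))^n
      = (8 / (3 * R^2) * (-a)^n) * r ^ (1 - α * n) := by
    intro r hr
    have hr0 : (0:ℝ) < r := lt_of_lt_of_le hR2 hr.1
    have h1 : (-(a * r ^ (-α)))^n = (-a)^n * (r ^ (-α))^n := by
      rw [show -(a * r ^ (-α)) = (-a) * r ^ (-α) by ring, mul_pow]
    have h2 : (r ^ (-α))^n = r ^ ((-α) * n) := by
      rw [← Real.rpow_natCast (r ^ (-α)) n, ← Real.rpow_mul hr0.le]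
    have h3 : r * r ^ ((-α) * n) = r ^ (1 - α * n) := by
      rw [show (1:ℝ) - α * n = 1 + (-α) * n by ring, Real.rpow_add hr0, Real.rpow_one]
    rw [h1, h2]
    rw [← h3]
    ring
  rw [setIntegral_congr_fun measurableSet_Icc hcongr, integral_const_mul,
    integral_Icc_eq_integral_Ioc,
    ← intervalIntegral.integral_of_le (by linarith : R/2 ≤ R),
    integral_rpow (Or.inr ⟨hne', by rw [Set.uIcc_of_le (by linarith : R/2 ≤ R)]; exact fun h => absurd h.1 (by linarith)⟩)]
  have e1 : (1:ℝ) - α * n + 1 = 2 - α * n := by ring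
  rw [e1]
  have hRa : (0:ℝ) < R ^ (-α) := Real.rpow_pos_of_pos hR _
  have hT : (0:ℝ) < (2:ℝ) ^ (α * n) := Real.rpow_pos_of_pos two_pos _
  have h4 : R ^ ((2:ℝ) - α * n) = R^2 * R ^ (-(α * n)) := by
    rw [show (2:ℝ) - α * n = 2 + (-(α * n)) by ring, Real.rpow_add hR, Real.rpow_two]
  have h5a : (R/2) ^ (-(α * (n:ℝ))) = R ^ (-(α * n)) * 2 ^ (α * n) := by
    rw [Real.div_rpow hR.le (by norm_num : (0:ℝ) ≤ 2),
      Real.rpow_neg (by norm_num : (0:ℝ) ≤ 2) (α * n)]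
    field_simp
  have h5 : (R/2) ^ ((2:ℝ) - α * n) = (R^2/4) * (R ^ (-(α * n)) * 2 ^ (α * n)) := by
    rw [show (2:ℝ) - α * n = 2 + (-(α * n)) by ring, Real.rpow_add hR2, h5a, Real.rpow_two]
    ring
  have h6 : (-(a * R ^ (-α)))^n = (-a)^n * R ^ (-(α * n)) := by
    rw [show -(a * R ^ (-α)) = (-a) * R ^ (-α) by ring, mul_pow,
      ← Real.rpow_natCast (R ^ (-α)) n, ← Real.rpow_mul hR.le, neg_mul]
  have h7 : (-(a * 2 ^ α * R ^ (-α)))^n = (-a)^n * (2 ^ (α * n) * R ^ (-(α * n))) := by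
    rw [show -(a * 2 ^ α * R ^ (-α)) = (-a) * (2 ^ α * R ^ (-α)) by ring, mul_pow, mul_pow,
      ← Real.rpow_natCast ((2:ℝ) ^ α) n, ← Real.rpow_mul (by norm_num : (0:ℝ) ≤ 2),
      ← Real.rpow_natCast (R ^ (-α)) n, ← Real.rpow_mul hR.le, neg_mul]
  rw [h4, h5, h6, h7]
  have hαn : (2:ℝ)/α - n = (2 - α * n)/α := by field_simp
  rw [hαn]
  field_simp
  ring

/-- Corollary 1: closed-form Laplace transform of the terrestrial interference in the
two-device case: the interferer's distance `D` has density `8r/(3R²)` on `[R/2, R]`,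
its Rayleigh power gain `H` is Exp(1) independent of `D`, and for `sP 2^α R^(-α) < 1`,
`E[exp(-sP D^(-α) H)] = (4/3) S_δ(-sP R^(-α)) - (1/3) S_δ(-sP 2^α R^(-α))`. -/
theorem stmt_8 {Ω : Type*} [MeasurableSpace Ω] (μ : Measure Ω) [IsProbabilityMeasure μ]
    (R P α δ : ℝ) (hR : 0 < R) (hP : 0 < P) (hα : 2 < α) (hδ : δ = 2 / α)
    (D H : Ω → ℝ)
    (hD : Measure.map D μ = volume.withDensity (fun r => ENNReal.ofReal
      (Set.indicator (Set.Icc (R / 2) R) (fun r => 8 * r / (3 * R ^ 2)) r)))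
    (hH : Measure.map H μ = volume.withDensity (fun x => ENNReal.ofReal
      (Set.indicator (Set.Ici (0 : ℝ)) (fun x => Real.exp (-x)) x)))
    (hindep : IndepFun D H μ)
    (s : ℝ) (hs : 0 < s) (hsmall : s * P * 2 ^ α * R ^ (-α) < 1) :
    ∫ ω, Real.exp (-(s * P * (D ω) ^ (-α) * H ω)) ∂μ
      = 4 / 3 * Sser δ (-(s * P * R ^ (-α))) - 1 / 3 * Sser δ (-(s * P * 2 ^ α * R ^ (-α))) := by
  have hα0 : (0:ℝ) < α := by linarith
  have hδ0 : 0 < δ := by rw [hδ]; positivity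
  have hδ1 : δ < 1 := by rw [hδ, div_lt_one hα0]; linarith
  have ha : 0 < s * P := mul_pos hs hP
  have hR2 : (0:ℝ) < R / 2 := by linarith
  have hRa : (0:ℝ) < R ^ (-α) := Real.rpow_pos_of_pos hR _
  have h2α : (1:ℝ) < 2 ^ α := by
    rw [show (1:ℝ) = (2:ℝ) ^ (0:ℝ) by simp]
    exact Real.rpow_lt_rpow_left_iff one_lt_two |>.2 hα0
  have hq0 : 0 < s * P * 2 ^ α * R ^ (-α) := by positivity
  have hz1lt : s * P * R ^ (-α) < 1 := by nlinarith
  have hz1pos : 0 < s * P * R ^ (-α) := by positivity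
  -- densities
  set fD : ℝ → ℝ := fun r => 8 * r / (3 * R ^ 2) with hfD_def
  have hfDc : Continuous fD := by
    have : fD = fun r => 8 * r / (3 * R ^ 2) := rfl
    rw [this]
    fun_prop
  have hfDm : Measurable fD := hfDc.measurable
  have hfD0 : ∀ r ∈ Icc (R/2) R, 0 ≤ fD r := by
    intro r hr
    have hr0 : (0:ℝ) < r := lt_of_lt_of_le hR2 hr.1
    have : (0:ℝ) < R ^ 2 := by positivity
    positivity
  set ρD := volume.withDensity (fun r => ENNReal.ofReal
    (Set.indicator (Set.Icc (R / 2) R) fD r)) with hρD_def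
  set ρH := volume.withDensity (fun x => ENNReal.ofReal
    (Set.indicator (Set.Ici (0 : ℝ)) (fun x => Real.exp (-x)) x)) with hρH_def
  -- masses
  have hρD_univ : ρD univ = 1 := by
    rw [hρD_def, withDensity_apply _ MeasurableSet.univ, Measure.restrict_univ,
      ← ofReal_integral_eq_lintegral_ofReal
        ((integrable_indicator_iff measurableSet_Icc).2
          (hfDc.integrableOn_Icc))
        (ae_of_all _ (Set.indicator_nonneg hfD0))]
    rw [integral_indicator measurableSet_Icc, integral_Icc_eq_integral_Ioc,
      ← intervalIntegral.integral_of_le (by linarith : R/2 ≤ R)]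
    have : ∀ r : ℝ, fD r = (8/(3*R^2)) * r := fun r => by rw [hfD_def]; ring
    simp_rw [this]
    rw [intervalIntegral.integral_const_mul, integral_id]
    rw [show 8 / (3 * R ^ 2) * ((R ^ 2 - (R / 2) ^ 2) / 2) = 1 by field_simp; ring]
    simp
  have hexp_int : IntegrableOn (fun x => Real.exp (-x)) (Ici 0) volume := by
    rw [integrableOn_Ici_iff_integrableOn_Ioi]
    have := exp_neg_integrableOn_Ioi 0 (one_pos : (0:ℝ) < 1)
    simpa using this
  have hρH_univ : ρH univ = 1 := by
    rw [hρH_def, withDensity_apply _ MeasurableSet.univ, Measure.restrict_univ,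
      ← ofReal_integral_eq_lintegral_ofReal
        ((integrable_indicator_iff measurableSet_Ici).2 hexp_int)
        (ae_of_all _ (Set.indicator_nonneg (fun x _ => (Real.exp_pos _).le)))]
    rw [integral_indicator measurableSet_Ici, integral_Ici_eq_integral_Ioi,
      integral_exp_neg_Ioi_zero]
    simp
  haveI instD : IsProbabilityMeasure ρD := ⟨hρD_univ⟩
  haveI instH : IsProbabilityMeasure ρH := ⟨hρH_univ⟩
  have hDae : AEMeasurable D μ := by
    by_contra hc
    rw [Measure.map_of_not_aemeasurable hc] at hD
    rw [← hD] at hρD_univ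
    simp at hρD_univ
  have hHae : AEMeasurable H μ := by
    by_contra hc
    rw [Measure.map_of_not_aemeasurable hc] at hH
    rw [← hH] at hρH_univ
    simp at hρH_univ
  have hmap : μ.map (fun ω => (D ω, H ω)) = ρD.prod ρH := by
    rw [← hD, ← hH]
    exact (indepFun_iff_map_prod_eq_prod_map_map hDae hHae).1 hindep
  have hrpow : Measurable fun x : ℝ => x ^ (-α) := my_measurable_rpow_const (-α)
  have hFmeas : Measurable (fun p : ℝ × ℝ => Real.exp (-(s * P * p.1 ^ (-α) * p.2))) :=
    ((((hrpow.comp measurable_fst).const_mul (s * P)).mul measurable_snd).neg).exp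
  have step1 : ∫ ω, Real.exp (-(s * P * (D ω) ^ (-α) * H ω)) ∂μ
      = ∫ p : ℝ × ℝ, Real.exp (-(s * P * p.1 ^ (-α) * p.2)) ∂(ρD.prod ρH) := by
    rw [← hmap, integral_map (hDae.prodMk hHae) hFmeas.aestronglyMeasurable]
  have hIc : ρD (Icc (R/2) R)ᶜ = 0 := by
    rw [hρD_def, withDensity_apply _ measurableSet_Icc.compl,
      setLIntegral_congr_fun (g := fun _ => (0:ENNReal)) measurableSet_Icc.compl
        (fun x hx => by rw [Set.indicator_of_notMem hx, ENNReal.ofReal_zero])]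
    simp
  have hHc : ρH (Ici (0:ℝ))ᶜ = 0 := by
    rw [hρH_def, withDensity_apply _ measurableSet_Ici.compl,
      setLIntegral_congr_fun (g := fun _ => (0:ENNReal)) measurableSet_Ici.compl
        (fun x hx => by rw [Set.indicator_of_notMem hx, ENNReal.ofReal_zero])]
    simp
  have haeD : ∀ᵐ r ∂ρD, r ∈ Icc (R/2) R := by
    rw [ae_iff]; exact hIc
  have haeP : ∀ᵐ p : ℝ × ℝ ∂(ρD.prod ρH), p.1 ∈ Icc (R/2) R ∧ 0 ≤ p.2 := by
    rw [ae_iff]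
    have hsub : {p : ℝ × ℝ | ¬(p.1 ∈ Icc (R/2) R ∧ 0 ≤ p.2)} ⊆
        ((Icc (R/2) R)ᶜ ×ˢ (univ : Set ℝ)) ∪ ((univ : Set ℝ) ×ˢ (Ici (0:ℝ))ᶜ) := by
      intro p hp
      rw [mem_setOf_eq, not_and_or] at hp
      rcases hp with h | h
      · exact Or.inl ⟨h, mem_univ _⟩
      · exact Or.inr ⟨mem_univ _, h⟩
    have hHc' : ρH (Iio 0) = 0 := by rwa [compl_Ici] at hHc
    refine measure_mono_null hsub ?_
    apply measure_union_null <;> rw [Measure.prod_prod] <;> simp [hIc, hHc, hHc']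
  have hFint : Integrable (fun p : ℝ × ℝ => Real.exp (-(s * P * p.1 ^ (-α) * p.2)))
      (ρD.prod ρH) := by
    refine Integrable.mono' (integrable_const 1) hFmeas.aestronglyMeasurable ?_
    filter_upwards [haeP] with p hp
    rw [Real.norm_eq_abs, abs_of_pos (Real.exp_pos _)]
    have h1 : (0:ℝ) ≤ p.1 := le_trans hR2.le hp.1.1
    have h2 : 0 ≤ s * P * p.1 ^ (-α) * p.2 :=
      mul_nonneg (mul_nonneg ha.le (Real.rpow_nonneg h1 _)) hp.2
    calc Real.exp (-(s * P * p.1 ^ (-α) * p.2)) ≤ Real.exp 0 :=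
          Real.exp_le_exp.2 (by linarith)
      _ = 1 := Real.exp_zero
  have step2 : ∫ p : ℝ × ℝ, Real.exp (-(s * P * p.1 ^ (-α) * p.2)) ∂(ρD.prod ρH)
      = ∫ r, (∫ h, Real.exp (-(s * P * r ^ (-α) * h)) ∂ρH) ∂ρD := integral_prod _ hFint
  have step3 : ∫ r, (∫ h, Real.exp (-(s * P * r ^ (-α) * h)) ∂ρH) ∂ρD
      = ∫ r, (1 + s * P * r ^ (-α))⁻¹ ∂ρD := by
    apply integral_congr_ae
    filter_upwards [haeD] with r hr
    have hb : 0 ≤ s * P * r ^ (-α) :=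
      mul_nonneg ha.le (Real.rpow_nonneg (le_trans hR2.le hr.1) _)
    rw [hρH_def]
    exact lap_exp hb
  have step4 : ∫ r, (1 + s * P * r ^ (-α))⁻¹ ∂ρD
      = ∫ r in Icc (R/2) R, fD r * (1 + s * P * r ^ (-α))⁻¹ := by
    rw [hρD_def]; exact integral_withDensity_ind measurableSet_Icc hfDm hfD0 _
  have hbound : ∀ r ∈ Icc (R/2) R, s * P * r ^ (-α) ≤ s * P * 2 ^ α * R ^ (-α) := by
    intro r hr
    have h1 : r ^ (-α) ≤ (R/2) ^ (-α) :=
      Real.rpow_le_rpow_of_nonpos hR2 hr.1 (by linarith)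
    have h2 : (R/2) ^ (-α) = R ^ (-α) * 2 ^ α := by
      rw [Real.div_rpow hR.le (by norm_num : (0:ℝ) ≤ 2),
        Real.rpow_neg (by norm_num : (0:ℝ) ≤ 2)]
      field_simp
    nlinarith
  have step5 : ∫ r in Icc (R/2) R, fD r * (1 + s * P * r ^ (-α))⁻¹
      = ∫ r in Icc (R/2) R, ∑' n : ℕ, fD r * (-(s * P * r ^ (-α))) ^ n := by
    apply setIntegral_congr_fun measurableSet_Icc
    intro r hr
    have hb0 : 0 ≤ s * P * r ^ (-α) :=
      mul_nonneg ha.le (Real.rpow_nonneg (le_trans hR2.le hr.1) _)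
    have habs : |(-(s * P * r ^ (-α)))| < 1 := by
      rw [abs_neg, abs_of_nonneg hb0]; exact lt_of_le_of_lt (hbound r hr) hsmall
    show fD r * (1 + s * P * r ^ (-α))⁻¹ = ∑' n : ℕ, fD r * (-(s * P * r ^ (-α))) ^ n
    rw [tsum_mul_left, tsum_geometric_of_abs_lt_one habs, sub_neg_eq_add]
  have hg : Measurable fun r : ℝ => -(s * P * r ^ (-α)) := (hrpow.const_mul (s * P)).neg
  have step6 : ∫ r in Icc (R/2) R, ∑' n : ℕ, fD r * (-(s * P * r ^ (-α))) ^ n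
      = ∑' n : ℕ, ∫ r in Icc (R/2) R, fD r * (-(s * P * r ^ (-α))) ^ n := by
    apply integral_tsum (fun n => (hfDm.mul (hg.pow_const n)).aestronglyMeasurable)
    have hb : ∀ n : ℕ, ∫⁻ r in Icc (R/2) R, ‖fD r * (-(s * P * r ^ (-α))) ^ n‖₊
        ≤ ENNReal.ofReal (8/(3*R)) * ENNReal.ofReal (s * P * 2 ^ α * R ^ (-α)) ^ n
          * volume (Icc (R/2) R) := by
      intro n
      have hptw : ∀ r ∈ Icc (R/2) R, (‖fD r * (-(s * P * r ^ (-α))) ^ n‖₊ : ENNReal)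
          ≤ ENNReal.ofReal (8/(3*R)) * ENNReal.ofReal (s * P * 2 ^ α * R ^ (-α)) ^ n := by
        intro r hr
        have hr0 : (0:ℝ) < r := lt_of_lt_of_le hR2 hr.1
        have hb0 : 0 ≤ s * P * r ^ (-α) :=
          mul_nonneg ha.le (Real.rpow_nonneg hr0.le _)
        rw [← enorm_eq_nnnorm, ← ofReal_norm, ← ENNReal.ofReal_pow (by positivity),
          ← ENNReal.ofReal_mul (by positivity)]
        apply ENNReal.ofReal_le_ofReal
        rw [norm_mul, norm_pow, Real.norm_eq_abs, Real.norm_eq_abs, abs_neg]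
        have h1 : |fD r| ≤ 8/(3*R) := by
          rw [abs_of_nonneg (hfD0 r hr), hfD_def]
          rw [div_le_div_iff₀ (by positivity) (by positivity)]
          nlinarith [hr.2]
        have h2 : |s * P * r ^ (-α)| ≤ s * P * 2 ^ α * R ^ (-α) := by
          rw [abs_of_nonneg hb0]; exact hbound r hr
        exact mul_le_mul h1 (pow_le_pow_left₀ (abs_nonneg _) h2 n)
          (pow_nonneg (abs_nonneg _) n) (by positivity)
      calc ∫⁻ r in Icc (R/2) R, ‖fD r * (-(s * P * r ^ (-α))) ^ n‖₊
          ≤ ∫⁻ _ in Icc (R/2) R, ENNReal.ofReal (8/(3*R))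
              * ENNReal.ofReal (s * P * 2 ^ α * R ^ (-α)) ^ n :=
            lintegral_mono_ae ((ae_restrict_iff' measurableSet_Icc).2 (ae_of_all _ hptw))
        _ = ENNReal.ofReal (8/(3*R)) * ENNReal.ofReal (s * P * 2 ^ α * R ^ (-α)) ^ n
              * volume (Icc (R/2) R) := setLIntegral_const _ _
    apply ne_top_of_le_ne_top ?_ (ENNReal.tsum_le_tsum hb)
    have heq : ∑' n : ℕ, ENNReal.ofReal (8/(3*R))
          * ENNReal.ofReal (s * P * 2 ^ α * R ^ (-α)) ^ n * volume (Icc (R/2) R)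
        = ENNReal.ofReal (8/(3*R)) * volume (Icc (R/2) R)
          * (1 - ENNReal.ofReal (s * P * 2 ^ α * R ^ (-α)))⁻¹ := by
      have harr : ∀ n : ℕ, ENNReal.ofReal (8/(3*R))
            * ENNReal.ofReal (s * P * 2 ^ α * R ^ (-α)) ^ n * volume (Icc (R/2) R)
          = (ENNReal.ofReal (8/(3*R)) * volume (Icc (R/2) R))
            * ENNReal.ofReal (s * P * 2 ^ α * R ^ (-α)) ^ n := fun n => by ring
      rw [tsum_congr harr, ENNReal.tsum_mul_left, ENNReal.tsum_geometric]
    rw [heq]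
    apply ENNReal.mul_ne_top
    · exact ENNReal.mul_ne_top ENNReal.ofReal_ne_top (measure_Icc_lt_top).ne
    · rw [ENNReal.inv_ne_top]
      have hlt : ENNReal.ofReal (s * P * 2 ^ α * R ^ (-α)) < 1 := by
        rw [show (1:ENNReal) = ENNReal.ofReal 1 by simp]
        exact ENNReal.ofReal_lt_ofReal_iff one_pos |>.2 hsmall
      exact (tsub_pos_iff_lt.2 hlt).ne'
  have step7 : ∀ n : ℕ, ∫ r in Icc (R/2) R, fD r * (-(s * P * r ^ (-α))) ^ n
      = 4/3 * (δ/(δ - n) * (-(s * P * R ^ (-α))) ^ n)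
        - 1/3 * (δ/(δ - n) * (-(s * P * 2 ^ α * R ^ (-α))) ^ n) := by
    intro n
    rw [hδ]
    have := pow_int_eval (a := s * P) hR hα n
    simpa [hfD_def] using this
  rw [step1, step2, step3, step4, step5, step6, tsum_congr step7]
  have hz1 : |(-(s * P * R ^ (-α)))| < 1 := by
    rw [abs_neg, abs_of_pos hz1pos]; exact hz1lt
  have hz2 : |(-(s * P * 2 ^ α * R ^ (-α)))| < 1 := by
    rw [abs_neg, abs_of_pos hq0]; exact hsmall
  have hsum1 := sser_summable hδ0 hδ1 hz1
  have hsum2 := sser_summable hδ0 hδ1 hz2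
  rw [Summable.tsum_sub (hsum1.mul_left _) (hsum2.mul_left _), tsum_mul_left, tsum_mul_left]
  rfl
end

section
/- Let $0<\ell<u$, $P>0$, $\alpha>0$, $m>0$, and set $\delta=3/\alpha$. Let $D$ be a random variable with density $f(r)=\frac{3r^2}{u^3-\ell^3}$ on $[\ell,\,u]$, and let $H$ be a random variable with the Gamma$(m,m)$ density, independent of $D$. Then for every $s>0$, writing $\lambda=sP/m$, $\mathbb{E}\bigl[\exp(-sP\,D^{-\alpha}H)\bigr] \;=\; \frac{3\,\lambda^{\delta}}{(u^3-\ell^3)\,\alpha} \int_{\lambda u^{-\alpha}}^{\lambda \ell^{-\alpha}} t^{-\delta-1}\,(1+t)^{-m}\, dt$. -/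
open MeasureTheory ProbabilityTheory Set
open scoped ENNReal NNReal

lemma aux_gamma_laplace {m c : ℝ} (hm : 0 < m) (hc : 0 ≤ c) :
    ∫ x in Ioi (0:ℝ), m ^ m * x ^ (m - 1) / Real.Gamma m * Real.exp (-m * x) * Real.exp (-(c * x))
      = (1 + c / m) ^ (-m) := by
  have hmc : 0 < m + c := by linarith
  have hG : 0 < Real.Gamma m := Real.Gamma_pos_of_pos hm
  have h1 : ∀ x : ℝ, m ^ m * x ^ (m - 1) / Real.Gamma m * Real.exp (-m * x) * Real.exp (-(c * x))
      = m ^ m / Real.Gamma m * (x ^ (m - 1) * Real.exp (-((m + c) * x))) := by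
    intro x
    rw [mul_assoc, ← Real.exp_add]
    have : -m * x + -(c * x) = -((m + c) * x) := by ring
    rw [this]
    ring
  simp_rw [h1]
  rw [MeasureTheory.integral_const_mul,
    Real.integral_rpow_mul_exp_neg_mul_Ioi hm hmc]
  have h2 : (1 : ℝ) + c / m = (m + c) / m := by field_simp
  rw [h2, Real.rpow_neg (by positivity), Real.div_rpow hmc.le hm.le, one_div,
    Real.inv_rpow hmc.le]
  have hmm : (0:ℝ) < m ^ m := Real.rpow_pos_of_pos hm m
  have hmcm : (0:ℝ) < (m + c) ^ m := Real.rpow_pos_of_pos hmc m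
  field_simp

lemma aux_subst {l u lam α δ m : ℝ} (hl : 0 < l) (hlu : l < u) (hlam : 0 < lam)
    (hα : 0 < α) (hδ : δ = 3 / α) :
    ∫ t in (lam * u ^ (-α))..(lam * l ^ (-α)), t ^ (-δ - 1) * (1 + t) ^ (-m)
      = α * lam ^ (-δ) * ∫ r in l..u, r ^ 2 * (1 + lam * r ^ (-α)) ^ (-m) := by
  set f : ℝ → ℝ := fun r => lam * r ^ (-α) with hf
  set f' : ℝ → ℝ := fun r => lam * (-α * r ^ (-α - 1)) with hf'
  set g : ℝ → ℝ := fun t => t ^ (-δ - 1) * (1 + t) ^ (-m) with hg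
  have huIcc : uIcc u l = Icc l u := by rw [uIcc_comm, uIcc_of_le hlu.le]
  have hposIcc : ∀ x ∈ Icc l u, 0 < x := fun x hx => lt_of_lt_of_le hl hx.1
  have hderiv : ∀ x ∈ uIcc u l, HasDerivAt f (f' x) x := by
    intro x hx
    rw [huIcc] at hx
    exact (Real.hasDerivAt_rpow_const (Or.inl (hposIcc x hx).ne')).const_mul lam
  have hcont : ContinuousOn f' (uIcc u l) := by
    rw [huIcc]
    apply ContinuousOn.const_smul ?_ lam
    apply ContinuousOn.const_smul ?_ (-α)
    exact fun x hx => ((Real.continuousAt_rpow_const x _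
      (Or.inl (hposIcc x hx).ne')).continuousWithinAt)
  have himg : f '' uIcc u l ⊆ Ioi 0 := by
    rintro y ⟨x, hx, rfl⟩
    rw [huIcc] at hx
    exact mul_pos hlam (Real.rpow_pos_of_pos (hposIcc x hx) _)
  have hgcont : ContinuousOn g (f '' uIcc u l) := by
    apply ContinuousOn.mono ?_ himg
    apply ContinuousOn.mul
    · exact fun t ht => (Real.continuousAt_rpow_const t _ (Or.inl (ne_of_gt ht))).continuousWithinAt
    · apply ContinuousOn.rpow_const
      · exact (continuous_const.add continuous_id).continuousOn
      · intro t ht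
        exact Or.inl (by simp only [mem_Ioi] at ht; positivity)
  have key := intervalIntegral.integral_comp_smul_deriv' hderiv hcont hgcont
  have hfu : f u = lam * u ^ (-α) := rfl
  have hfl : f l = lam * l ^ (-α) := rfl
  rw [← hfu, ← hfl, ← key]
  have hcongr : ∀ x ∈ uIcc u l,
      f' x • (g ∘ f) x = (-(α * lam ^ (-δ))) * (x ^ 2 * (1 + lam * x ^ (-α)) ^ (-m)) := by
    intro x hx
    rw [huIcc] at hx
    have hx0 : 0 < x := hposIcc x hx
    have h1 : (lam * x ^ (-α)) ^ (-δ - 1)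
        = lam ^ (-δ - 1) * (x ^ (-α)) ^ (-δ - 1) :=
      Real.mul_rpow hlam.le (Real.rpow_pos_of_pos hx0 _).le
    have h2 : (x ^ (-α)) ^ (-δ - 1) = x ^ ((-α) * (-δ - 1)) :=
      (Real.rpow_mul hx0.le (-α) (-δ - 1)).symm
    have hαδ : α * δ = 3 := by rw [hδ]; field_simp
    have h3 : (-α) * (-δ - 1) = 3 + α := by
      have : α * δ = 3 := hαδ
      nlinarith [this]
    have h4 : lam * lam ^ (-δ - 1) = lam ^ (-δ) := by
      nth_rewrite 1 [← Real.rpow_one lam]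
      rw [← Real.rpow_add hlam]
      norm_num
    have h5 : x ^ (-α - 1) * x ^ ((3:ℝ) + α) = x ^ (2:ℕ) := by
      rw [← Real.rpow_add hx0, ← Real.rpow_natCast x 2]
      push_cast
      ring_nf
    simp only [smul_eq_mul, Function.comp_apply, hf, hf', hg]
    rw [h1, h2, h3]
    calc lam * (-α * x ^ (-α - 1)) * (lam ^ (-δ - 1) * x ^ ((3:ℝ) + α)
          * (1 + lam * x ^ (-α)) ^ (-m))
        = -α * (lam * lam ^ (-δ - 1)) * (x ^ (-α - 1) * x ^ ((3:ℝ) + α))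
          * (1 + lam * x ^ (-α)) ^ (-m) := by ring
      _ = (-(α * lam ^ (-δ))) * (x ^ 2 * (1 + lam * x ^ (-α)) ^ (-m)) := by
          rw [h4, h5]; ring
  rw [intervalIntegral.integral_congr hcongr, intervalIntegral.integral_const_mul,
    intervalIntegral.integral_symm l u]
  ring

lemma aux_ae_withDensity {ρ : ℝ → ℝ} {S : Set ℝ} (hS : MeasurableSet S) :
    ∀ᵐ x ∂(volume.withDensity fun x => ENNReal.ofReal (S.indicator ρ x)), x ∈ S := by
  rw [ae_iff]
  have hc : {x : ℝ | ¬ x ∈ S} = Sᶜ := rfl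
  rw [hc, withDensity_apply _ hS.compl]
  rw [setLIntegral_congr_fun hS.compl (fun x hx => ?_), lintegral_zero]
  simp [indicator_of_notMem (by simpa using hx : x ∉ S)]

/-- Lemma 4 (per interfering device): for a device whose distance `D` has density
`3r²/(u³-ℓ³)` on `[ℓ, u]` and whose Nakagami-m power gain `H` is Gamma(m,m) independent
of `D`, the Laplace transform of `P D^(-α) H` is
`(3λ^δ/((u³-ℓ³)α)) ∫_{λu^(-α)}^{λℓ^(-α)} t^(-δ-1)(1+t)^(-m) dt` with `λ = sP/m`, `δ = 3/α`. -/
theorem stmt_10 {Ω : Type*} [MeasurableSpace Ω] (μ : Measure Ω) [IsProbabilityMeasure μ]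
    (l u P α m δ : ℝ) (hl : 0 < l) (hlu : l < u) (hP : 0 < P) (hα : 0 < α) (hm : 0 < m)
    (hδ : δ = 3 / α)
    (D H : Ω → ℝ)
    (hD : Measure.map D μ = volume.withDensity (fun r => ENNReal.ofReal
      (Set.indicator (Set.Icc l u) (fun r => 3 * r ^ 2 / (u ^ 3 - l ^ 3)) r)))
    (hH : Measure.map H μ = volume.withDensity (fun x => ENNReal.ofReal
      (Set.indicator (Set.Ioi (0 : ℝ))
        (fun x => m ^ m * x ^ (m - 1) / Real.Gamma m * Real.exp (-m * x)) x)))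
    (hindep : IndepFun D H μ)
    (s : ℝ) (hs : 0 < s) (lam : ℝ) (hlam : lam = s * P / m) :
    ∫ ω, Real.exp (-(s * P * (D ω) ^ (-α) * H ω)) ∂μ
      = 3 * lam ^ δ / ((u ^ 3 - l ^ 3) * α) *
          ∫ t in (lam * u ^ (-α))..(lam * l ^ (-α)), t ^ (-δ - 1) * (1 + t) ^ (-m) := by
  have hul : (0:ℝ) < u ^ 3 - l ^ 3 := sub_pos.mpr (pow_lt_pow_left₀ hlu hl.le (by norm_num))
  have hlam_pos : 0 < lam := by rw [hlam]; positivity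
  set ρ₁ : ℝ → ℝ := Set.indicator (Set.Icc l u) (fun r => 3 * r ^ 2 / (u ^ 3 - l ^ 3)) with hρ₁
  set ρ₂ : ℝ → ℝ := Set.indicator (Set.Ioi (0:ℝ))
      (fun x => m ^ m * x ^ (m - 1) / Real.Gamma m * Real.exp (-m * x)) with hρ₂
  set ν₁ : Measure ℝ := volume.withDensity (fun r => ENNReal.ofReal (ρ₁ r)) with hν₁
  set ν₂ : Measure ℝ := volume.withDensity (fun x => ENNReal.ofReal (ρ₂ x)) with hν₂
  have hρ₁m : Measurable ρ₁ := by
    apply Measurable.indicator ?_ measurableSet_Icc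
    fun_prop
  have hρ₂m : Measurable ρ₂ := by
    apply Measurable.indicator ?_ measurableSet_Ioi
    apply Measurable.mul ?_ (by fun_prop)
    exact ((measurable_const.mul (measurable_id.pow measurable_const)).div_const _)
  -- the two pushforward measures are nonzero
  have hne₁ : ν₁ ≠ 0 := by
    intro h0
    have h1 : ν₁ (Icc l u) = 0 := by rw [h0]; rfl
    rw [hν₁, withDensity_apply _ measurableSet_Icc] at h1
    have h2 : ENNReal.ofReal (3 * l ^ 2 / (u ^ 3 - l ^ 3)) * volume (Icc l u)
        ≤ ∫⁻ r in Icc l u, ENNReal.ofReal (ρ₁ r) := by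
      rw [← setLIntegral_const]
      apply setLIntegral_mono' measurableSet_Icc
      intro x hx
      rw [hρ₁, indicator_of_mem hx]
      apply ENNReal.ofReal_le_ofReal
      have hx1 : 0 < x := lt_of_lt_of_le hl hx.1
      gcongr
      nlinarith [hx.1]
    rw [h1] at h2
    simp only [nonpos_iff_eq_zero, mul_eq_zero] at h2
    rcases h2 with h2 | h2
    · rw [ENNReal.ofReal_eq_zero] at h2
      have : (0:ℝ) < 3 * l ^ 2 / (u ^ 3 - l ^ 3) := by positivity
      linarith
    · rw [Real.volume_Icc] at h2
      rw [ENNReal.ofReal_eq_zero] at h2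
      linarith
  have hne₂ : ν₂ ≠ 0 := by
    have hone : ν₂ univ = 1 := by
      rw [hν₂, withDensity_apply _ MeasurableSet.univ, Measure.restrict_univ]
      have h0 : ∀ᵐ x : ℝ ∂volume, x ≠ 0 := by
        rw [ae_iff]
        simpa using Real.volume_singleton (a := 0)
      have heq : (fun x => ENNReal.ofReal (ρ₂ x)) =ᵐ[volume] gammaPDF m m := by
        filter_upwards [h0] with x hx
        rcases lt_or_gt_of_ne hx with h | h
        · rw [hρ₂, indicator_of_notMem (by simpa using h.not_gt), gammaPDF_of_neg h]
          simp
        · rw [hρ₂, indicator_of_mem (mem_Ioi.mpr h), gammaPDF_of_nonneg h.le]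
          congr 1
          rw [neg_mul]
          ring
      rw [lintegral_congr_ae heq, lintegral_gammaPDF_eq_one hm hm]
    intro h0
    rw [h0] at hone
    simp at hone
  have hDm : AEMeasurable D μ := by
    by_contra hc
    rw [Measure.map_of_not_aemeasurable hc] at hD
    exact hne₁ (hν₁ ▸ hD.symm)
  have hHm : AEMeasurable H μ := by
    by_contra hc
    rw [Measure.map_of_not_aemeasurable hc] at hH
    exact hne₂ (hν₂ ▸ hH.symm)
  haveI hprob₁ : IsProbabilityMeasure ν₁ := hD ▸ Measure.isProbabilityMeasure_map hDm
  haveI hprob₂ : IsProbabilityMeasure ν₂ := hH ▸ Measure.isProbabilityMeasure_map hHm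
  have hjoint : Measure.map (fun ω => (D ω, H ω)) μ = ν₁.prod ν₂ := by
    rw [(indepFun_iff_map_prod_eq_prod_map_map hDm hHm).mp hindep, hD, hH]
  set F : ℝ × ℝ → ℝ := fun p => Real.exp (-(s * P * p.1 ^ (-α) * p.2)) with hF
  have hFm : Measurable F := by
    apply Real.measurable_exp.comp
    apply Measurable.neg
    exact (((measurable_fst.pow measurable_const).const_mul (s * P)).mul measurable_snd)
  have hae₁ : ∀ᵐ r ∂ν₁, r ∈ Icc l u := aux_ae_withDensity measurableSet_Icc
  have hae₂ : ∀ᵐ x ∂ν₂, x ∈ Ioi (0:ℝ) := aux_ae_withDensity measurableSet_Ioi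
  have hae_prod : ∀ᵐ z ∂(ν₁.prod ν₂), z.1 ∈ Icc l u ∧ z.2 ∈ Ioi (0:ℝ) := by
    rw [ae_iff]
    have h1 : (ν₁.prod ν₂) ((Icc l u)ᶜ ×ˢ (univ : Set ℝ)) = 0 := by
      rw [Measure.prod_prod]
      have : ν₁ (Icc l u)ᶜ = 0 := ae_iff.mp hae₁
      rw [this, zero_mul]
    have h2 : (ν₁.prod ν₂) ((univ : Set ℝ) ×ˢ (Ioi (0:ℝ))ᶜ) = 0 := by
      rw [Measure.prod_prod]
      have : ν₂ (Ioi (0:ℝ))ᶜ = 0 := ae_iff.mp hae₂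
      rw [this, mul_zero]
    apply measure_mono_null ?_ (measure_union_null h1 h2)
    intro z hz
    simp only [mem_setOf_eq, not_and_or] at hz
    rcases hz with h | h
    · exact mem_union_left _ (mem_prod.mpr ⟨h, mem_univ _⟩)
    · exact mem_union_right _ (mem_prod.mpr ⟨mem_univ _, h⟩)
  have hInt : Integrable F (ν₁.prod ν₂) := by
    apply Integrable.mono' (integrable_const (1:ℝ)) hFm.aestronglyMeasurable
    filter_upwards [hae_prod] with z hz
    rw [hF, Real.norm_eq_abs, Real.abs_exp, Real.exp_le_one_iff]
    have h1 : 0 < z.1 ^ (-α) := Real.rpow_pos_of_pos (lt_of_lt_of_le hl hz.1.1) _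
    have h2 : (0:ℝ) < z.2 := hz.2
    have : 0 ≤ s * P * z.1 ^ (-α) * z.2 := by positivity
    linarith
  -- inner integral
  have hinner : ∀ r ∈ Icc l u, (∫ x, F (r, x) ∂ν₂) = (1 + lam * r ^ (-α)) ^ (-m) := by
    intro r hr
    have hr0 : 0 < r := lt_of_lt_of_le hl hr.1
    have hc0 : 0 ≤ s * P * r ^ (-α) := by positivity
    have hrw : ν₂ = volume.withDensity (fun x => ((fun x => Real.toNNReal (ρ₂ x)) x : ℝ≥0∞)) := by
      rfl
    rw [hrw, integral_withDensity_eq_integral_smul hρ₂m.real_toNNReal (fun x => F (r, x))]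
    have hptw : ∀ x : ℝ, Real.toNNReal (ρ₂ x) • F (r, x)
        = Set.indicator (Ioi (0:ℝ))
            (fun x => m ^ m * x ^ (m - 1) / Real.Gamma m * Real.exp (-m * x)
              * Real.exp (-(s * P * r ^ (-α) * x))) x := by
      intro x
      by_cases hx : x ∈ Ioi (0:ℝ)
      · rw [indicator_of_mem hx]
        have hx0 : (0:ℝ) < x := hx
        have hρnn : 0 ≤ m ^ m * x ^ (m - 1) / Real.Gamma m * Real.exp (-m * x) := by
          have h1 : (0:ℝ) < Real.Gamma m := Real.Gamma_pos_of_pos hm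
          have h2 : (0:ℝ) ≤ x ^ (m - 1) := Real.rpow_nonneg hx0.le _
          positivity
        rw [hρ₂, indicator_of_mem hx, NNReal.smul_def, Real.coe_toNNReal _ hρnn]
        rw [smul_eq_mul, hF]
      · rw [indicator_of_notMem hx, hρ₂, indicator_of_notMem hx]
        simp
    simp_rw [hptw]
    rw [integral_indicator measurableSet_Ioi, aux_gamma_laplace hm hc0]
    have hcm : s * P * r ^ (-α) / m = lam * r ^ (-α) := by rw [hlam]; ring
    rw [hcm]
  -- main chain
  have step1 : ∫ ω, Real.exp (-(s * P * (D ω) ^ (-α) * H ω)) ∂μ = ∫ z, F z ∂(ν₁.prod ν₂) := by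
    rw [← hjoint, integral_map (hDm.prodMk hHm) hFm.aestronglyMeasurable]
  have step2 : (∫ z, F z ∂(ν₁.prod ν₂)) = ∫ r, (∫ x, F (r, x) ∂ν₂) ∂ν₁ := integral_prod F hInt
  have step3 : (∫ r, (∫ x, F (r, x) ∂ν₂) ∂ν₁) = ∫ r, (1 + lam * r ^ (-α)) ^ (-m) ∂ν₁ := by
    refine integral_congr_ae ?_
    filter_upwards [hae₁] with r hr
    exact hinner r hr
  have step4 : (∫ r, (1 + lam * r ^ (-α)) ^ (-m) ∂ν₁)
      = ∫ r in Icc l u, 3 * r ^ 2 / (u ^ 3 - l ^ 3) * (1 + lam * r ^ (-α)) ^ (-m) := by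
    have hrw : ν₁ = volume.withDensity (fun x => ((fun x => Real.toNNReal (ρ₁ x)) x : ℝ≥0∞)) :=
      rfl
    rw [hrw, integral_withDensity_eq_integral_smul hρ₁m.real_toNNReal]
    have hptw : ∀ r : ℝ, Real.toNNReal (ρ₁ r) • (1 + lam * r ^ (-α)) ^ (-m)
        = Set.indicator (Icc l u)
            (fun r => 3 * r ^ 2 / (u ^ 3 - l ^ 3) * (1 + lam * r ^ (-α)) ^ (-m)) r := by
      intro r
      by_cases hr : r ∈ Icc l u
      · rw [indicator_of_mem hr, hρ₁, indicator_of_mem hr, NNReal.smul_def,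
          Real.coe_toNNReal _ (by positivity), smul_eq_mul]
      · rw [indicator_of_notMem hr, hρ₁, indicator_of_notMem hr]
        simp
    simp_rw [hptw]
    rw [integral_indicator measurableSet_Icc]
  have step5 : (∫ r in Icc l u, 3 * r ^ 2 / (u ^ 3 - l ^ 3) * (1 + lam * r ^ (-α)) ^ (-m))
      = 3 / (u ^ 3 - l ^ 3) * ∫ r in l..u, r ^ 2 * (1 + lam * r ^ (-α)) ^ (-m) := by
    rw [integral_Icc_eq_integral_Ioc, ← intervalIntegral.integral_of_le hlu.le,
      ← intervalIntegral.integral_const_mul]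
    apply intervalIntegral.integral_congr
    intro x _
    ring
  rw [step1, step2, step3, step4, step5, aux_subst hl hlu hlam_pos hα hδ]
  have hexp : lam ^ δ * lam ^ (-δ) = 1 := by
    rw [← Real.rpow_add hlam_pos]
    simp
  set I := ∫ r in l..u, r ^ 2 * (1 + lam * r ^ (-α)) ^ (-m) with hI
  have hαne : α ≠ 0 := hα.ne'
  have hulne : u ^ 3 - l ^ 3 ≠ 0 := hul.ne'
  have hkey : 3 * lam ^ δ / ((u ^ 3 - l ^ 3) * α) * (α * lam ^ (-δ) * I)
      = (lam ^ δ * lam ^ (-δ)) * (α / α) * (3 / (u ^ 3 - l ^ 3) * I) := by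
    rw [mul_comm (u ^ 3 - l ^ 3) α, ← div_div]
    field_simp
  rw [hkey, hexp, div_self hαne]
  ring
end
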